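/- (Thom's Lemma) Let P be a real polynomial of degree d and σ = (σ_1,…,σ_d) a sequence of signs in {+,−}. Let F_σ(P) = {α ∈ ℝ : σ_i · P^{(d−i)}(α) ≥ 0 for i = 1,…,d} (sign conditions on all derivatives of P of degree 1 through d, in the large sense) and U_σ(P) the same set with strict inequalities. If F_σ(P) is nonempty then it is a point or a closed interval (possibly unbounded), its interior is U_σ(P), and every finite endpoint of F_σ(P) is a root of some derivative P^{(j)} (0 ≤ j < d). -/

import Mathlib

open Polynomial Set

/-- The real number `+1` or `-1` associated to a sign. -/
def sgn (b : Bool) : ℝ := if b then 1 else -1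

lemma sgn_cases (b : Bool) : sgn b = 1 ∨ sgn b = -1 := by
  cases b <;> simp [sgn]

lemma sgn_ne_zero (b : Bool) : sgn b ≠ 0 := by
  rcases sgn_cases b with h | h <;> rw [h] <;> norm_num

/-- intersection of an ordconnected set with `{0 ≤ f}` for `f` monotone or antitone on it. -/
lemma ordConn_aux {S : Set ℝ} (hS : S.OrdConnected) {f : ℝ → ℝ}
    (hf : MonotoneOn f S ∨ AntitoneOn f S) :
    ({y ∈ S | 0 ≤ f y} : Set ℝ).OrdConnected := by
  constructor
  intro x hx z hz y hy
  have hyS : y ∈ S := hS.out hx.1 hz.1 hy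
  refine ⟨hyS, ?_⟩
  rcases hf with h | h
  · exact le_trans hx.2 (h hx.1 hyS hy.1)
  · exact le_trans hz.2 (h hyS hz.1 hy.2)

lemma natDegree_iter_deriv (P : Polynomial ℝ) (k : ℕ) (h : k ≤ P.natDegree) :
    (Polynomial.derivative^[k] P).natDegree = P.natDegree - k := by
  induction k with
  | zero => simp
  | succ n ih =>
    have hn : n ≤ P.natDegree := Nat.le_of_succ_le h
    have hpos : 0 < (Polynomial.derivative^[n] P).natDegree := by
      rw [ih hn]; omega
    rw [Function.iterate_succ_apply',
      Polynomial.natDegree_eq_of_degree_eq_some (Polynomial.degree_derivative_eq _ hpos),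
      ih hn]
    omega

lemma thom_ordConn : ∀ (d : ℕ) (P : Polynomial ℝ), P.natDegree = d → ∀ σ : Fin d → Bool,
    ({α : ℝ | ∀ i : Fin d,
      0 ≤ sgn (σ i) * (Polynomial.derivative^[d - ((i : ℕ) + 1)] P).eval α}).OrdConnected := by
  intro d
  induction d with
  | zero =>
    intro P _ σ
    have : {α : ℝ | ∀ i : Fin 0,
        0 ≤ sgn (σ i) * (Polynomial.derivative^[0 - ((i : ℕ) + 1)] P).eval α} = univ :=
      eq_univ_of_forall (fun α i => i.elim0)
    rw [this]; exact ordConnected_univ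
  | succ d ih =>
    intro P hdeg σ
    have hP0 : P ≠ 0 := fun h => by simp [h] at hdeg
    have hdeg' : (Polynomial.derivative P).natDegree = d := by
      have := Polynomial.natDegree_eq_of_degree_eq_some
        (Polynomial.degree_derivative_eq P (by omega))
      rw [this, hdeg]
      omega
    set σ' : Fin d → Bool := fun j => σ j.castSucc with hσ'
    set F' := {α : ℝ | ∀ j : Fin d,
      0 ≤ sgn (σ' j) * (Polynomial.derivative^[d - ((j : ℕ) + 1)]
        (Polynomial.derivative P)).eval α} with hF'
    have hIH : F'.OrdConnected := ih (Polynomial.derivative P) hdeg' σ'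
    have hiter : ∀ j : Fin d, Polynomial.derivative^[d + 1 - ((j : ℕ) + 1)] P
        = Polynomial.derivative^[d - ((j : ℕ) + 1)] (Polynomial.derivative P) := by
      intro j
      have h1 : d + 1 - ((j : ℕ) + 1) = (d - ((j : ℕ) + 1)) + 1 := by
        have := j.isLt; omega
      rw [h1, Function.iterate_succ_apply]
    -- the key set equality
    have hset : {α : ℝ | ∀ i : Fin (d + 1),
        0 ≤ sgn (σ i) * (Polynomial.derivative^[d + 1 - ((i : ℕ) + 1)] P).eval α}
        = {y ∈ F' | 0 ≤ sgn (σ (Fin.last d)) * P.eval y} := by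
      ext α
      constructor
      · intro h
        refine ⟨fun j => ?_, ?_⟩
        · have := h j.castSucc
          rwa [Fin.coe_castSucc, hiter j] at this
        · have := h (Fin.last d)
          simpa using this
      · rintro ⟨h1, h2⟩ i
        refine Fin.lastCases ?_ ?_ i
        · simpa using h2
        · intro j
          have := h1 j
          rwa [Fin.coe_castSucc, hiter j]
    rw [hset]
    -- constant sign of derivative P on F'
    have key : ∃ ε : ℝ, (ε = 1 ∨ ε = -1) ∧
        ∀ α ∈ F', 0 ≤ ε * (Polynomial.derivative P).eval α := by
      rcases Nat.eq_zero_or_pos d with hd | hd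
      · subst hd
        obtain ⟨a, ha⟩ := Polynomial.natDegree_eq_zero.mp hdeg'
        refine ⟨if 0 ≤ a then 1 else -1, by split <;> simp, ?_⟩
        intro α _
        rw [← ha]
        simp only [Polynomial.eval_C]
        split <;> rename_i h
        · linarith
        · nlinarith [lt_of_not_ge h]
      · obtain ⟨e, rfl⟩ : ∃ e, d = e + 1 := ⟨d - 1, by omega⟩
        refine ⟨sgn (σ' (Fin.last e)), sgn_cases _, ?_⟩
        intro α hα
        have := hα (Fin.last e)
        simpa using this
    obtain ⟨ε, hε, hsign⟩ := key
    have hconv : Convex ℝ F' := hIH.convex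
    have hmono : MonotoneOn (fun α => ε * P.eval α) F' := by
      apply monotoneOn_of_deriv_nonneg hconv
        (Continuous.continuousOn (continuous_const.mul (Polynomial.continuous P)))
        (fun x _ => (((P.hasDerivAt x).const_mul ε).differentiableAt).differentiableWithinAt)
      intro x hx
      have hd : deriv (fun α => ε * P.eval α) x
          = ε * (Polynomial.derivative P).eval x := ((P.hasDerivAt x).const_mul ε).deriv
      show 0 ≤ deriv (fun α => ε * P.eval α) x
      rw [hd]
      exact hsign x (interior_subset hx)
    -- the function sgn (σ last) * P is monotone or antitone on F'
    have hf : MonotoneOn (fun α => sgn (σ (Fin.last d)) * P.eval α) F'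
        ∨ AntitoneOn (fun α => sgn (σ (Fin.last d)) * P.eval α) F' := by
      rcases sgn_cases (σ (Fin.last d)) with hs | hs <;> rcases hε with hε | hε
      · left; rw [hs, ← hε]; exact hmono
      · right; rw [hs]
        have : (fun α => (1:ℝ) * P.eval α) = fun α => -(ε * P.eval α) := by
          funext α; rw [hε]; ring
        rw [this]; exact hmono.neg
      · right; rw [hs]
        have : (fun α => (-1:ℝ) * P.eval α) = fun α => -(ε * P.eval α) := by
          funext α; rw [hε]; ring
        rw [this]; exact hmono.neg
      · left; rw [hs, ← hε]; exact hmono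
    exact ordConn_aux hIH hf

theorem thom_lemma (P : Polynomial ℝ) (d : ℕ) (hdeg : P.natDegree = d)
    (σ : Fin d → Bool)
    (F U : Set ℝ)
    (hF : F = {α : ℝ | ∀ i : Fin d,
      0 ≤ sgn (σ i) * (Polynomial.derivative^[d - ((i : ℕ) + 1)] P).eval α})
    (hU : U = {α : ℝ | ∀ i : Fin d,
      0 < sgn (σ i) * (Polynomial.derivative^[d - ((i : ℕ) + 1)] P).eval α})
    (hne : F.Nonempty) :
    IsClosed F ∧ F.OrdConnected ∧ interior F = U ∧
    ∀ x ∈ frontier F, ∃ j < d, (Polynomial.derivative^[j] P).eval x = 0 := by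
  classical
  have hclosed : IsClosed F := by
    rw [hF]
    have : {α : ℝ | ∀ i : Fin d,
        0 ≤ sgn (σ i) * (Polynomial.derivative^[d - ((i : ℕ) + 1)] P).eval α}
        = ⋂ i : Fin d, {α : ℝ |
          0 ≤ sgn (σ i) * (Polynomial.derivative^[d - ((i : ℕ) + 1)] P).eval α} := by
      ext α; simp [mem_iInter]
    rw [this]
    exact isClosed_iInter fun i => isClosed_le continuous_const
      (continuous_const.mul (Polynomial.continuous _))
  have hUopen : IsOpen U := by
    rw [hU]
    have : {α : ℝ | ∀ i : Fin d,
        0 < sgn (σ i) * (Polynomial.derivative^[d - ((i : ℕ) + 1)] P).eval α}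
        = ⋂ i : Fin d, {α : ℝ |
          0 < sgn (σ i) * (Polynomial.derivative^[d - ((i : ℕ) + 1)] P).eval α} := by
      ext α; simp [mem_iInter]
    rw [this]
    exact isOpen_iInter_of_finite fun i => isOpen_lt continuous_const
      (continuous_const.mul (Polynomial.continuous _))
  have hUF : U ⊆ F := by
    rw [hF, hU]; intro α h i; exact (h i).le
  have hUint : U ⊆ interior F := interior_maximal hUF hUopen
  have hintU : interior F ⊆ U := by
    intro x hx
    by_contra hxU
    have hxF : x ∈ F := interior_subset hx
    rw [hU] at hxU
    simp only [mem_setOf_eq] at hxU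
    push_neg at hxU
    obtain ⟨i, hi⟩ := hxU
    have hxFi : 0 ≤ sgn (σ i) * (Polynomial.derivative^[d - ((i : ℕ) + 1)] P).eval x := by
      rw [hF] at hxF; exact hxF i
    have heq0 : (Polynomial.derivative^[d - ((i : ℕ) + 1)] P).eval x = 0 := by
      have : sgn (σ i) * (Polynomial.derivative^[d - ((i : ℕ) + 1)] P).eval x = 0 :=
        le_antisymm hi hxFi
      rcases mul_eq_zero.mp this with h | h
      · exact absurd h (sgn_ne_zero _)
      · exact h
    have hex : ∃ n, n < d ∧ (Polynomial.derivative^[d - (n + 1)] P).eval x = 0 :=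
      ⟨i, i.isLt, heq0⟩
    set k := Nat.find hex with hkdef
    obtain ⟨hkd, hkeq⟩ := Nat.find_spec hex
    -- c is the value of the next derivative at x; it is nonzero
    have hc : (Polynomial.derivative^[d - k] P).eval x ≠ 0 := by
      rcases Nat.eq_zero_or_pos k with hk0 | hkpos
      · -- k = 0 : derivative^[d] P is a nonzero constant
        rw [hk0, Nat.sub_zero]
        have hd1 : 1 ≤ d := by omega
        have hdeg1 : (Polynomial.derivative^[d - 1] P).natDegree = 1 := by
          rw [natDegree_iter_deriv P (d - 1) (by omega), hdeg]; omega
        have hstep : Polynomial.derivative^[d] P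
            = Polynomial.derivative (Polynomial.derivative^[d - 1] P) := by
          conv_lhs => rw [show d = (d - 1) + 1 by omega]
          rw [Function.iterate_succ_apply']
        have hne0 : Polynomial.derivative (Polynomial.derivative^[d - 1] P) ≠ 0 := by
          intro h
          have := Polynomial.natDegree_eq_zero_of_derivative_eq_zero h
          omega
        have hdeg0 : (Polynomial.derivative (Polynomial.derivative^[d - 1] P)).natDegree = 0 := by
          have := Polynomial.natDegree_derivative_le (Polynomial.derivative^[d - 1] P)
          omega
        obtain ⟨a, ha⟩ := Polynomial.natDegree_eq_zero.mp hdeg0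
        rw [hstep, ← ha]
        simp only [Polynomial.eval_C]
        intro h
        rw [h] at ha
        simp at ha
        exact hne0 ha.symm
      · -- k ≥ 1 : minimality
        have hmin := Nat.find_min hex (show k - 1 < k by omega)
        push_neg at hmin
        have := hmin (by omega)
        have harg : d - ((k - 1) + 1) = d - k := by omega
        rwa [harg] at this
    -- derivative relation
    have hQ : Polynomial.derivative (Polynomial.derivative^[d - (k + 1)] P)
        = Polynomial.derivative^[d - k] P := by
      have h1 : d - k = (d - (k + 1)) + 1 := by omega
      rw [h1, Function.iterate_succ_apply']
    set s := sgn (σ ⟨k, hkd⟩) with hsdef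
    set g : ℝ → ℝ := fun y => s * (Polynomial.derivative^[d - (k + 1)] P).eval y with hgdef
    have hgx : g x = 0 := by simp [hgdef, hkeq]; exact Or.inr hkeq
    have hFg : ∀ y ∈ F, 0 ≤ g y := by
      intro y hy
      rw [hF] at hy
      exact hy ⟨k, hkd⟩
    have hderiv : HasDerivAt g (s * (Polynomial.derivative^[d - k] P).eval x) x := by
      have := ((Polynomial.derivative^[d - (k + 1)] P).hasDerivAt x).const_mul s
      rwa [hQ] at this
    have hsc : s * (Polynomial.derivative^[d - k] P).eval x ≠ 0 :=
      mul_ne_zero (sgn_ne_zero _) hc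
    have hslope : Filter.Tendsto (slope g x) (nhdsWithin x {x}ᶜ)
        (nhds (s * (Polynomial.derivative^[d - k] P).eval x)) :=
      hasDerivAt_iff_tendsto_slope.mp hderiv
    have hmemint : interior F ∈ nhds x := isOpen_interior.mem_nhds hx
    rcases lt_or_gt_of_ne hsc with hneg | hpos
    · -- derivative negative: look right of x
      have h1 : ∀ᶠ y in nhdsWithin x (Ioi x), slope g x y < 0 := by
        have := hslope.eventually (eventually_lt_nhds hneg)
        exact this.filter_mono (nhdsWithin_mono x fun y hy => ne_of_gt hy)
      have h2 : ∀ᶠ y in nhdsWithin x (Ioi x), y ∈ interior F :=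
        mem_nhdsWithin_of_mem_nhds hmemint
      have h3 : ∀ᶠ y in nhdsWithin x (Ioi x), x < y := self_mem_nhdsWithin
      obtain ⟨y, ⟨hy1, hy2⟩, hy3⟩ := ((h1.and h2).and h3).exists
      have hgy : g y < 0 := by
        rw [slope_def_field, hgx] at hy1
        have h4 : x - y < 0 := by linarith
        rcases div_neg_iff.mp hy1 with ⟨ha, hb⟩ | ⟨ha, hb⟩
        · linarith
        · linarith
      exact absurd (hFg y (interior_subset hy2)) (not_le.mpr hgy)
    · -- derivative positive: look left of x
      have h1 : ∀ᶠ y in nhdsWithin x (Iio x), 0 < slope g x y := by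
        have := hslope.eventually (eventually_gt_nhds hpos)
        exact this.filter_mono (nhdsWithin_mono x fun y hy => ne_of_lt hy)
      have h2 : ∀ᶠ y in nhdsWithin x (Iio x), y ∈ interior F :=
        mem_nhdsWithin_of_mem_nhds hmemint
      have h3 : ∀ᶠ y in nhdsWithin x (Iio x), y < x := self_mem_nhdsWithin
      obtain ⟨y, ⟨hy1, hy2⟩, hy3⟩ := ((h1.and h2).and h3).exists
      have hgy : g y < 0 := by
        rw [slope_def_field, hgx] at hy1
        have h4 : 0 < x - y := by linarith
        rcases div_pos_iff.mp hy1 with ⟨ha, hb⟩ | ⟨ha, hb⟩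
        · linarith
        · linarith
      exact absurd (hFg y (interior_subset hy2)) (not_le.mpr hgy)
  refine ⟨hclosed, ?_, Subset.antisymm hintU hUint, ?_⟩
  · rw [hF]; exact thom_ordConn d P hdeg σ
  · intro x hxf
    rw [hclosed.frontier_eq] at hxf
    obtain ⟨hxF, hxI⟩ := hxf
    have hxU : x ∉ U := fun h => hxI (hUint h)
    rw [hU] at hxU
    simp only [mem_setOf_eq] at hxU
    push_neg at hxU
    obtain ⟨i, hi⟩ := hxU
    have hxFi : 0 ≤ sgn (σ i) * (Polynomial.derivative^[d - ((i : ℕ) + 1)] P).eval x := by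
      rw [hF] at hxF; exact hxF i
    have heq0 : (Polynomial.derivative^[d - ((i : ℕ) + 1)] P).eval x = 0 := by
      have h0 : sgn (σ i) * (Polynomial.derivative^[d - ((i : ℕ) + 1)] P).eval x = 0 :=
        le_antisymm hi hxFi
      rcases mul_eq_zero.mp h0 with h | h
      · exact absurd h (sgn_ne_zero _)
      · exact h
    exact ⟨d - ((i : ℕ) + 1), by have := i.isLt; omega, heq0⟩
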